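/- The interchange law holds for probabilistic bundle event structures modulo probabilistic simulation: for pBES (ℰ,π), (ℱ,ρ), (ℰ',π'), (ℱ',ρ') whose underlying BES are regular and pairwise disjoint, ((ℰ,π) ‖ (ℱ,ρ)) · ((ℰ',π') ‖ (ℱ',ρ')) ⊑ ((ℰ,π) · (ℰ',π')) ‖ ((ℱ,ρ) · (ℱ',ρ')), i.e. there exists a probabilistic simulation from the left-hand pBES to the right-hand pBES. -/

import Mathlib

open Classical

namespace PCKA

/-- A bundle event structure over event universe `Ev` and alphabet `A`:
a set of events, a conflict relation, a bundle relation, a partial labelling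
(modelled via `Option`) and a set of final events. -/
structure BES (Ev A : Type) where
  E : Set Ev
  conflict : Ev → Ev → Prop
  bundle : Set Ev → Ev → Prop
  lab : Ev → Option A
  final : Set Ev

variable {Ev A : Type}

/-- Well-formedness of a bundle event structure. -/
def IsBES (ℰ : BES Ev A) : Prop :=
  (∀ e, ¬ ℰ.conflict e e) ∧
  (∀ e e', ℰ.conflict e e' → ℰ.conflict e' e) ∧
  (∀ e e', ℰ.conflict e e' → e ∈ ℰ.E ∧ e' ∈ ℰ.E) ∧
  (∀ x e, ℰ.bundle x e → e ∈ ℰ.E ∧ x ⊆ ℰ.E ∧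
    ∀ a ∈ x, ∀ b ∈ x, a ≠ b → ℰ.conflict a b) ∧
  (∀ e, ℰ.lab e ≠ none → e ∈ ℰ.E) ∧
  ℰ.final ⊆ ℰ.E ∧
  (∀ a ∈ ℰ.final, ∀ b ∈ ℰ.final, a ≠ b → ℰ.conflict a b)

/-- `α` is an event trace of `ℰ`: every event is enabled by each of its bundles
and is distinct from and conflict-free with all earlier events. -/
def IsTrace (ℰ : BES Ev A) (α : List Ev) : Prop :=
  ∀ l e r, α = l ++ e :: r →
    e ∈ ℰ.E ∧
    (∀ x, ℰ.bundle x e → ∃ e' ∈ l, e' ∈ x) ∧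
    (∀ e' ∈ l, e ≠ e' ∧ ¬ ℰ.conflict e e')

/-- A configuration is the set of events of some event trace (a linearisation). -/
def IsConfig (ℰ : BES Ev A) (x : Set Ev) : Prop :=
  ∃ α : List Ev, IsTrace ℰ α ∧ {e | e ∈ α} = x

/-- Adjacent occurrences in a list. -/
def traceAdj (α : List Ev) (a b : Ev) : Prop := ∃ l r, α = l ++ a :: b :: r

/-- The order `≼_α` induced by an event trace: reflexive transitive closure of
adjacency in the trace. -/
def traceOrder (α : List Ev) : Ev → Ev → Prop := Relation.ReflTransGen (traceAdj α)

/-- The causal order `≼_x` of a configuration: the intersection of the orders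
of all its linearisations. -/
def configOrder (ℰ : BES Ev A) (x : Set Ev) (a b : Ev) : Prop :=
  ∀ α, IsTrace ℰ α → {e | e ∈ α} = x → traceOrder α a b

/-- The labelling restricted to a set of events. -/
noncomputable def labOn (ℰ : BES Ev A) (x : Set Ev) : Ev → Option A :=
  fun e => if e ∈ x then ℰ.lab e else none

/-- `(x, o, l)` is the lposet of the configuration `x` of `ℰ`. -/
def IsLposetOf (ℰ : BES Ev A) (x : Set Ev) (o : Ev → Ev → Prop)
    (l : Ev → Option A) : Prop :=
  IsConfig ℰ x ∧
  (∀ a b, o a b ↔ (a ∈ x ∧ b ∈ x ∧ configOrder ℰ x a b)) ∧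
  l = labOn ℰ x

/-- The lposet `(x,ox,lx)` is a prefix of the lposet `(y,oy,ly)`. -/
def LposetPrefix (x : Set Ev) (ox : Ev → Ev → Prop) (lx : Ev → Option A)
    (y : Set Ev) (oy : Ev → Ev → Prop) (ly : Ev → Option A) : Prop :=
  x ⊆ y ∧
  (∀ e ∈ x, ly e = lx e) ∧
  (∀ e e', oy e e' → e' ∈ x → e ∈ x ∧ ox e e')

/-- Restriction of a list to the elements of a set (the subsequence `α|_x`). -/
noncomputable def listRestrict (α : List Ev) (x : Set Ev) : List Ev :=
  α.filter (fun e => decide (e ∈ x))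

/-- The sub-BES order `ℰ ⊑ ℱ`. -/
def SubBES (ℰ ℱ : BES Ev A) : Prop :=
  ℰ.E ⊆ ℱ.E ∧
  (∀ e e', ℰ.conflict e e' ↔ (ℱ.conflict e e' ∧ e ∈ ℰ.E ∧ e' ∈ ℰ.E)) ∧
  (∀ x e, ℰ.bundle x e → ℱ.bundle x e) ∧
  (∀ x e, ℱ.bundle x e → e ∈ ℰ.E → x ⊆ ℰ.E ∧ ℰ.bundle x e) ∧
  (∀ e ∈ ℰ.E, ℰ.lab e = ℱ.lab e) ∧
  (∀ e, e ∈ ℰ.final ↔ (e ∈ ℱ.final ∧ e ∈ ℰ.E))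

/-- `ℰ` is the componentwise union of the chain `c`. -/
def IsChainUnion (c : ℕ → BES Ev A) (ℰ : BES Ev A) : Prop :=
  ℰ.E = (⋃ i, (c i).E) ∧
  (∀ e e', ℰ.conflict e e' ↔ ∃ i, (c i).conflict e e') ∧
  (∀ x e, ℰ.bundle x e ↔ ∃ i, (c i).bundle x e) ∧
  (∀ i, ∀ e ∈ (c i).E, ℰ.lab e = (c i).lab e) ∧
  (∀ e, e ∉ (⋃ i, (c i).E) → ℰ.lab e = none) ∧
  ℰ.final = (⋃ i, (c i).final)

/-- Immediate conflict. -/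
def ImmConflict (ℰ : BES Ev A) (e e' : Ev) : Prop :=
  ℰ.conflict e e' ∧
  ∃ x, IsConfig ℰ x ∧ IsConfig ℰ (x ∪ {e}) ∧ IsConfig ℰ (x ∪ {e'})

/-- A partial cluster: pairwise immediately conflicting, equally pointed events. -/
def PartialCluster (ℰ : BES Ev A) (K : Set Ev) : Prop :=
  K ⊆ ℰ.E ∧
  (∀ e ∈ K, ∀ e' ∈ K, e ≠ e' → ImmConflict ℰ e e') ∧
  (∀ e ∈ K, ∀ e' ∈ K, ∀ x, ℰ.bundle x e → ℰ.bundle x e')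

/-- A cluster is a maximal partial cluster. -/
def Cluster (ℰ : BES Ev A) (K : Set Ev) : Prop :=
  PartialCluster ℰ K ∧ ∀ H, PartialCluster ℰ H → K ⊆ H → H = K

/-- `⟨e⟩`: the intersection of all clusters containing `e`. -/
def cell (ℰ : BES Ev A) (e : Ev) : Set Ev :=
  ⋂₀ {K | Cluster ℰ K ∧ e ∈ K}

/-- `cfl x`: events in conflict with some event of `x`. -/
def cfl (ℰ : BES Ev A) (x : Set Ev) : Set Ev :=
  {e | e ∈ ℰ.E ∧ ∃ e' ∈ x, ℰ.conflict e e'}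

/-- Confusion freeness. -/
def ConfusionFree (ℰ : BES Ev A) : Prop :=
  (∀ e e', ImmConflict ℰ e e' → e ∈ cell ℰ e') ∧
  (∀ x e, IsConfig ℰ x → cell ℰ e ∩ x = ∅ → IsConfig ℰ (x ∪ {e}) →
    ∀ e'' ∈ cell ℰ e, IsConfig ℰ (x ∪ {e''}))

/-- Initial events: those pointed by no bundle. -/
def bInit (ℰ : BES Ev A) : Set Ev :=
  {e | e ∈ ℰ.E ∧ ∀ x, ¬ ℰ.bundle x e}

/-- Nondeterministic choice `ℰ + ℱ` (for disjoint BES). -/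
def bchoice (ℰ ℱ : BES Ev A) : BES Ev A where
  E := ℰ.E ∪ ℱ.E
  conflict := fun e e' => ℰ.conflict e e' ∨ ℱ.conflict e e' ∨
    (e ∈ bInit ℰ ∧ e' ∈ bInit ℱ) ∨ (e ∈ bInit ℱ ∧ e' ∈ bInit ℰ) ∨
    (e ∈ ℰ.final ∧ e' ∈ ℱ.final) ∨ (e ∈ ℱ.final ∧ e' ∈ ℰ.final)
  bundle := fun x e => ℰ.bundle x e ∨ ℱ.bundle x e
  lab := fun e => (ℰ.lab e).orElse (fun _ => ℱ.lab e)
  final := ℰ.final ∪ ℱ.final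

/-- Sequential composition `ℰ · ℱ` (for disjoint BES). -/
def bseq (ℰ ℱ : BES Ev A) : BES Ev A where
  E := ℰ.E ∪ ℱ.E
  conflict := fun e e' => ℰ.conflict e e' ∨ ℱ.conflict e e'
  bundle := fun x e => ℰ.bundle x e ∨ ℱ.bundle x e ∨ (x = ℰ.final ∧ e ∈ bInit ℱ)
  lab := fun e => (ℰ.lab e).orElse (fun _ => ℱ.lab e)
  final := ℱ.final

/-- Concurrent composition `ℰ ‖ ℱ` with fresh delimiter events `d₁, d₂`. -/
def bpar (ℰ ℱ : BES Ev A) (d₁ d₂ : Ev) : BES Ev A where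
  E := ℰ.E ∪ ℱ.E ∪ {d₁, d₂}
  conflict := fun e e' => ℰ.conflict e e' ∨ ℱ.conflict e e'
  bundle := fun x e => ℰ.bundle x e ∨ ℱ.bundle x e ∨
    (x = {d₁} ∧ (e ∈ bInit ℰ ∨ e ∈ bInit ℱ)) ∨
    (x = ℰ.final ∧ e = d₂) ∨ (x = ℱ.final ∧ e = d₂)
  lab := fun e => (ℰ.lab e).orElse (fun _ => ℱ.lab e)
  final := {d₂}

/-- Renaming of a BES along a map of events. -/
noncomputable def brename (g : Ev → Ev) (ℰ : BES Ev A) : BES Ev A where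
  E := g '' ℰ.E
  conflict := fun e e' => ∃ a b, ℰ.conflict a b ∧ e = g a ∧ e' = g b
  bundle := fun x e => ∃ y a, ℰ.bundle y a ∧ x = g '' y ∧ e = g a
  lab := fun e => if h : ∃ a, a ∈ ℰ.E ∧ g a = e then ℰ.lab h.choose else none
  final := g '' ℰ.final

/-- `ℰ'` is a (fresh) copy of `ℰ`. -/
def IsCopy (ℰ' ℰ : BES Ev A) : Prop :=
  ∃ g : Ev → Ev, Set.InjOn g ℰ.E ∧ ℰ' = brename g ℰ

/-- `𝒮` is the binary Kleene product `ℰ * ℱ`: the componentwise union of the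
chain `ℱ ⊑ ℱ + ℰ·ℱ ⊑ ⋯` built with fresh disjoint copies at each stage. -/
def IsStarOf (ℰ ℱ 𝒮 : BES Ev A) : Prop :=
  ∃ c : ℕ → BES Ev A,
    IsCopy (c 0) ℱ ∧
    (∀ i, ∃ ℰ' ℱ' : BES Ev A, IsCopy ℰ' ℰ ∧ IsCopy ℱ' ℱ ∧
      ℱ'.E ∩ (ℰ'.E ∪ (c i).E) = ∅ ∧ ℰ'.E ∩ (c i).E = ∅ ∧
      c (i + 1) = bchoice ℱ' (bseq ℰ' (c i)) ∧
      SubBES (c i) (c (i + 1))) ∧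
    IsChainUnion c 𝒮

/-- The basic BES `0` (deadlock). -/
def besZero : BES Ev A :=
  ⟨∅, fun _ _ => False, fun _ _ => False, fun _ => none, ∅⟩

/-- The basic BES `1` (skip), with a single unlabelled final event. -/
def besOne (e : Ev) : BES Ev A :=
  ⟨{e}, fun _ _ => False, fun _ _ => False, fun _ => none, {e}⟩

/-- The basic BES for a one-step action `a`. -/
noncomputable def besAct (e : Ev) (a : A) : BES Ev A :=
  ⟨{e}, fun _ _ => False, fun _ _ => False,
    fun e' => if e' = e then some a else none, {e}⟩

/-- Regular BES: built from the basic BES by `+`, `·`, `‖` and `*`. -/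
inductive Regular : BES Ev A → Prop
  | zero : Regular besZero
  | one (e : Ev) : Regular (besOne e)
  | act (e : Ev) (a : A) : Regular (besAct e a)
  | choice {ℰ ℱ : BES Ev A} : Regular ℰ → Regular ℱ → ℰ.E ∩ ℱ.E = ∅ →
      Regular (bchoice ℰ ℱ)
  | seq {ℰ ℱ : BES Ev A} : Regular ℰ → Regular ℱ → ℰ.E ∩ ℱ.E = ∅ →
      Regular (bseq ℰ ℱ)
  | par {ℰ ℱ : BES Ev A} (d₁ d₂ : Ev) : Regular ℰ → Regular ℱ →
      ℰ.E ∩ ℱ.E = ∅ → d₁ ≠ d₂ → d₁ ∉ ℰ.E ∪ ℱ.E → d₂ ∉ ℰ.E ∪ ℱ.E →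
      Regular (bpar ℰ ℱ d₁ d₂)
  | star {ℰ ℱ 𝒮 : BES Ev A} : Regular ℰ → Regular ℱ → IsStarOf ℰ ℱ 𝒮 →
      Regular 𝒮

/-- A probability distribution on a BES: a discrete distribution on events
whose support is contained in a single cell `⟨e⟩`. -/
def IsDistOn (ℰ : BES Ev A) (p : PMF Ev) : Prop :=
  ∃ e ∈ ℰ.E, p.support ⊆ cell ℰ e

/-- A probabilistic bundle event structure: a BES with a set of distributions. -/
structure PBES (Ev A : Type) where
  bes : BES Ev A
  dists : Set (PMF Ev)

/-- Well-formedness of a probabilistic BES. -/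
def IsPBES (P : PBES Ev A) : Prop :=
  IsBES P.bes ∧ ConfusionFree P.bes ∧
  (∀ p ∈ P.dists, IsDistOn P.bes p) ∧
  (∀ e ∈ P.bes.E, ∃ p ∈ P.dists, e ∈ p.support)

/-- No bundle set contains a final event. -/
def NoFinalBundle (ℰ : BES Ev A) : Prop :=
  ∀ x e, ℰ.bundle x e → x ∩ ℰ.final = ∅

/-- Probabilistic prefix: `x ⊑ Δ` iff `Δ = Σ_{e ∈ supp p} p e · δ_{x ∪ {e}}`
for some `p` in the distribution set, with `supp p` disjoint from `x` and all
extensions configurations. -/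
def ProbPrefix (P : PBES Ev A) (x : Set Ev) (Δ : PMF (Set Ev)) : Prop :=
  IsConfig P.bes x ∧
  ∃ p ∈ P.dists, p.support ∩ x = ∅ ∧
    (∀ e ∈ p.support, IsConfig P.bes (x ∪ {e})) ∧
    Δ = p.bind (fun e => PMF.pure (x ∪ {e}))

/-- Lifting of a relation `S ⊆ X × 𝒟(Y)` to `𝒟(X) × 𝒟(Y)`. -/
def Lift {X Y : Type} (S : X → PMF Y → Prop) (Δ : PMF X) (Θ : PMF Y) : Prop :=
  ∃ (ι : Type) (_ : Countable ι) (w : PMF ι) (xs : ι → X) (Θs : ι → PMF Y),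
    Δ = w.bind (fun i => PMF.pure (xs i)) ∧
    (∀ i, w i ≠ 0 → S (xs i) (Θs i)) ∧
    Θ = w.bind Θs

/-- The labelled events of a configuration. -/
def hatSet (ℰ : BES Ev A) (x : Set Ev) : Set Ev :=
  {e | e ∈ x ∧ ℰ.lab e ≠ none}

/-- Implementation (subsumption) `x ⊑_s y` between configurations: a
label-preserving monotonic bijection from the labelled events of `y` to those
of `x`. -/
def Subsum (ℰ : BES Ev A) (x : Set Ev) (ℱ : BES Ev A) (y : Set Ev) : Prop :=
  ∃ f : Ev → Ev, Set.BijOn f (hatSet ℱ y) (hatSet ℰ x) ∧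
    (∀ e ∈ hatSet ℱ y, ℰ.lab (f e) = ℱ.lab e) ∧
    (∀ e e', e ∈ hatSet ℱ y → e' ∈ hatSet ℱ y →
      configOrder ℱ y e e' → configOrder ℰ x (f e) (f e'))

/-- Probabilistic simulation from `P` to `Q`. -/
def IsSimulation (P Q : PBES Ev A) (S : Set Ev → PMF (Set Ev) → Prop) : Prop :=
  S ∅ (PMF.pure ∅) ∧
  (∀ x Θ, S x Θ → IsConfig P.bes x ∧
    ∀ y ∈ Θ.support, IsConfig Q.bes y ∧ Subsum P.bes x Q.bes y) ∧
  (∀ x Θ Δ', S x Θ → ProbPrefix P x Δ' →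
    ∃ Θ', Relation.ReflTransGen (Lift (ProbPrefix Q)) Θ Θ' ∧ Lift S Δ' Θ') ∧
  (∀ x Θ, S x Θ → (x ∩ P.bes.final).Nonempty →
    ∀ y ∈ Θ.support, (y ∩ Q.bes.final).Nonempty)

/-- `P ⊑ Q`: there exists a probabilistic simulation from `P` to `Q`. -/
def Sim (P Q : PBES Ev A) : Prop := ∃ S, IsSimulation P Q S

/-- Nondeterministic choice of pBES. -/
def pch (P Q : PBES Ev A) : PBES Ev A :=
  ⟨bchoice P.bes Q.bes, P.dists ∪ Q.dists⟩

/-- Sequential composition of pBES. -/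
def pseq (P Q : PBES Ev A) : PBES Ev A :=
  ⟨bseq P.bes Q.bes, P.dists ∪ Q.dists⟩

/-- Concurrent composition of pBES with fresh delimiters `d₁, d₂`. -/
noncomputable def ppar (P Q : PBES Ev A) (d₁ d₂ : Ev) : PBES Ev A :=
  ⟨bpar P.bes Q.bes d₁ d₂, P.dists ∪ Q.dists ∪ {PMF.pure d₁, PMF.pure d₂}⟩

/-- The sub-pBES order. -/
def SubPBES (P Q : PBES Ev A) : Prop :=
  SubBES P.bes Q.bes ∧ P.dists = {p | p ∈ Q.dists ∧ p.support ⊆ P.bes.E}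

/-- Renaming of a pBES. -/
noncomputable def prename (g : Ev → Ev) (P : PBES Ev A) : PBES Ev A :=
  ⟨brename g P.bes, (fun p => p.map g) '' P.dists⟩

/-- `P'` is a (fresh) copy of the pBES `P`. -/
def IsPCopy (P' P : PBES Ev A) : Prop :=
  ∃ g : Ev → Ev, Set.InjOn g P.bes.E ∧ P' = prename g P

/-- Componentwise union of a chain of pBES. -/
def IsPChainUnion (c : ℕ → PBES Ev A) (P : PBES Ev A) : Prop :=
  IsChainUnion (fun i => (c i).bes) P.bes ∧ P.dists = ⋃ i, (c i).dists

/-- `S` is the binary Kleene product `P * G` of pBES. -/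
def IsPStarOf (P G S : PBES Ev A) : Prop :=
  ∃ c : ℕ → PBES Ev A,
    IsPCopy (c 0) G ∧
    (∀ i, ∃ P' G' : PBES Ev A, IsPCopy P' P ∧ IsPCopy G' G ∧
      G'.bes.E ∩ (P'.bes.E ∪ (c i).bes.E) = ∅ ∧ P'.bes.E ∩ (c i).bes.E = ∅ ∧
      c (i + 1) = pch G' (pseq P' (c i)) ∧
      SubPBES (c i) (c (i + 1))) ∧
    IsPChainUnion c S

section Aux
variable {Ev A : Type}

lemma isTrace_nil (ℰ : BES Ev A) : IsTrace ℰ ([] : List Ev) := by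
  intro l e r h; exact absurd h (by simp)

lemma trace_fact {ℰ : BES Ev A} {α l r : List Ev} {e : Ev}
    (h : IsTrace ℰ α) (hd : α = l ++ e :: r) :
    e ∈ ℰ.E ∧ (∀ x, ℰ.bundle x e → ∃ e' ∈ l, e' ∈ x) ∧
    (∀ e' ∈ l, e ≠ e' ∧ ¬ ℰ.conflict e e') := h l e r hd

lemma IsTrace.mem_E {ℰ : BES Ev A} {α : List Ev} (h : IsTrace ℰ α) {e : Ev}
    (he : e ∈ α) : e ∈ ℰ.E := by
  obtain ⟨s, t, rfl⟩ := List.append_of_mem he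
  exact (h s e t rfl).1

lemma IsTrace.prefix' {ℰ : BES Ev A} {l r : List Ev} (h : IsTrace ℰ (l ++ r)) :
    IsTrace ℰ l := by
  intro l₁ e r₁ hd
  exact h l₁ e (r₁ ++ r) (by simp [hd])

lemma IsTrace.nodup {ℰ : BES Ev A} {α : List Ev} (h : IsTrace ℰ α) :
    α.Nodup := by
  induction α using List.reverseRecOn with
  | nil => simp
  | append_singleton β a ih =>
    have hβ : IsTrace ℰ β := h.prefix'
    rw [List.nodup_append]
    refine ⟨ih hβ, List.nodup_singleton a, ?_⟩
    intro b hb c hc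
    rw [List.mem_singleton] at hc
    exact fun hbc => ((h β a [] rfl).2.2 b hb).1 (hbc.trans hc).symm

lemma nodup_split_unique {α s₁ t₁ s₂ t₂ : List Ev} {b : Ev} (h : α.Nodup)
    (h1 : α = s₁ ++ b :: t₁) (h2 : α = s₂ ++ b :: t₂) : s₁ = s₂ ∧ t₁ = t₂ := by
  subst h1
  induction s₁ generalizing s₂ with
  | nil =>
    cases s₂ with
    | nil => simp_all
    | cons c s₂' =>
      simp only [List.nil_append, List.cons_append, List.cons.injEq] at h2
      obtain ⟨hbc, h2⟩ := h2
      exfalso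
      have hb : b ∉ t₁ := (List.nodup_cons.1 (by simpa using h)).1
      exact hb (h2 ▸ (by simp : b ∈ s₂' ++ b :: t₂))
  | cons a s₁' ih =>
    cases s₂ with
    | nil =>
      simp only [List.nil_append, List.cons_append, List.cons.injEq] at h2
      obtain ⟨hab, h2⟩ := h2
      exfalso
      have hb : a ∉ s₁' ++ b :: t₁ := (List.nodup_cons.1 (by simpa using h)).1
      exact hb (hab ▸ (by simp : b ∈ s₁' ++ b :: t₁))
    | cons c s₂' =>
      simp only [List.cons_append, List.cons.injEq] at h2
      obtain ⟨hac, h2⟩ := h2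
      have := ih (List.nodup_cons.1 (by simpa using h)).2 h2
      exact ⟨by rw [hac, this.1], this.2⟩

lemma traceOrder_of_split (l₁ : List Ev) (a : Ev) (l₂ : List Ev) (b : Ev)
    (l₃ : List Ev) : traceOrder (l₁ ++ a :: l₂ ++ b :: l₃) a b := by
  induction l₂ generalizing l₁ a with
  | nil => exact Relation.ReflTransGen.single ⟨l₁, l₃, by simp⟩
  | cons c l₂' ih =>
    refine Relation.ReflTransGen.head (b := c) ⟨l₁, l₂' ++ b :: l₃, by simp⟩ ?_
    have := ih (l₁ ++ [a]) c
    show traceOrder _ c b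
    simpa using this

lemma traceOrder_split {α : List Ev} (h : α.Nodup) {a b : Ev}
    (hab : traceOrder α a b) : a = b ∨ ∃ l₁ l₂ l₃, α = l₁ ++ a :: l₂ ++ b :: l₃ := by
  induction hab with
  | refl => exact Or.inl rfl
  | @tail m c _ hadj ih =>
    obtain ⟨s, t, hst⟩ := hadj
    rcases ih with rfl | ⟨l₁, l₂, l₃, hdec⟩
    · exact Or.inr ⟨s, [], t, by simpa using hst⟩
    · have hdec' : α = (l₁ ++ a :: l₂) ++ m :: l₃ := by simp [hdec]
      have hst' : α = s ++ m :: (c :: t) := hst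
      obtain ⟨he1, he2⟩ := nodup_split_unique h hdec' hst'
      refine Or.inr ⟨l₁, l₂ ++ [m], t, ?_⟩
      rw [hst', ← he1, ← he2]
      simp [hdec']

lemma map_filter_split {f : Ev → Ev} {q : Ev → Bool} {α l rr : List Ev} {e : Ev}
    (h : (α.filter q).map f = l ++ e :: rr) :
    ∃ l₀ e₀ r₀, α = l₀ ++ e₀ :: r₀ ∧ q e₀ = true ∧ f e₀ = e ∧
      (l₀.filter q).map f = l ∧ (r₀.filter q).map f = rr := by
  induction α generalizing l with
  | nil => simp at h
  | cons a α' ih =>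
    by_cases hq : q a = true
    · rw [List.filter_cons_of_pos hq, List.map_cons] at h
      cases l with
      | nil =>
        simp only [List.nil_append, List.cons.injEq] at h
        exact ⟨[], a, α', rfl, hq, h.1, by simp, h.2⟩
      | cons b l' =>
        simp only [List.cons_append, List.cons.injEq] at h
        obtain ⟨rfl, h⟩ := h
        obtain ⟨l₀, e₀, r₀, h1, h2, h3, h4, h5⟩ := ih h
        exact ⟨a :: l₀, e₀, r₀, by simp [h1], h2, h3,
          by simp [List.filter_cons_of_pos hq, h4], h5⟩
    · rw [List.filter_cons_of_neg (by simpa using hq)] at h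
      obtain ⟨l₀, e₀, r₀, h1, h2, h3, h4, h5⟩ := ih h
      exact ⟨a :: l₀, e₀, r₀, by simp [h1], h2, h3,
        by simp [List.filter_cons_of_neg (by simpa using hq), h4], h5⟩

lemma mem_map_filter {f : Ev → Ev} {q : Ev → Bool} {α : List Ev} {e : Ev} :
    e ∈ (α.filter q).map f ↔ ∃ a ∈ α, q a = true ∧ f a = e := by
  simp only [List.mem_map, List.mem_filter]
  tauto

end Aux
section Aux2
variable {Ev A : Type}

lemma cluster_exists {ℰ : BES Ev A} (hE : IsBES ℰ) {e : Ev} (he : e ∈ ℰ.E) :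
    ∃ K, Cluster ℰ K ∧ e ∈ K := by
  have hsing : PartialCluster ℰ {e} := by
    refine ⟨by simpa using he, ?_, ?_⟩
    · intro a ha b hb hab; simp at ha hb; simp [ha, hb] at hab
    · intro a ha b hb x hx; simp at ha hb; subst ha; subst hb; exact hx
  have hch : ∀ c ⊆ {K | PartialCluster ℰ K}, IsChain (fun x1 x2 => x1 ⊆ x2) c →
      c.Nonempty → ∃ ub ∈ {K | PartialCluster ℰ K}, ∀ s ∈ c, s ⊆ ub := by
    intro c hc hchain hcne
    refine ⟨⋃₀ c, ⟨?_, ?_, ?_⟩, fun s hs => Set.subset_sUnion_of_mem hs⟩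
    · intro a ha
      obtain ⟨K, hK, haK⟩ := ha
      exact (hc hK).1 haK
    · intro a ha b hb hab
      obtain ⟨K₁, hK₁, ha₁⟩ := ha
      obtain ⟨K₂, hK₂, hb₂⟩ := hb
      rcases hchain.total hK₁ hK₂ with h | h
      · exact (hc hK₂).2.1 a (h ha₁) b hb₂ hab
      · exact (hc hK₁).2.1 a ha₁ b (h hb₂) hab
    · intro a ha b hb x hx
      obtain ⟨K₁, hK₁, ha₁⟩ := ha
      obtain ⟨K₂, hK₂, hb₂⟩ := hb
      rcases hchain.total hK₁ hK₂ with h | h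
      · exact (hc hK₂).2.2 a (h ha₁) b hb₂ x hx
      · exact (hc hK₁).2.2 a ha₁ b (h hb₂) x hx
  obtain ⟨m, hm1, hm2⟩ := zorn_subset_nonempty {K | PartialCluster ℰ K} hch {e} hsing
  refine ⟨m, ⟨hm2.1, ?_⟩, hm1 rfl⟩
  intro H hH hmH
  exact le_antisymm (hm2.2 hH hmH) hmH

lemma support_subset_E {ℰ : BES Ev A} (hE : IsBES ℰ) {p : PMF Ev}
    (hp : IsDistOn ℰ p) : p.support ⊆ ℰ.E := by
  obtain ⟨e, he, hsupp⟩ := hp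
  obtain ⟨K, hK, heK⟩ := cluster_exists hE he
  intro a ha
  have : a ∈ cell ℰ e := hsupp ha
  exact hK.1.1 (this K ⟨hK, heK⟩)

lemma pmf_support_fn_subset (p : PMF Ev) (f : Ev → ENNReal) :
    Function.support (fun a => p a * f a) ⊆ p.support := by
  intro a ha
  rw [PMF.mem_support_iff]
  intro h0
  simp [Function.mem_support, h0] at ha

lemma lift_of_pmf {X Y : Type} (S : X → PMF Y → Prop) (p : PMF Ev)
    (f : Ev → X) (g : Ev → PMF Y) (h : ∀ e ∈ p.support, S (f e) (g e)) :
    Lift S (p.bind (fun e => PMF.pure (f e))) (p.bind g) := by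
  have hss : Function.support ⇑p ⊆ p.support := fun a ha => PMF.mem_support_iff p a |>.2 ha
  refine ⟨{e // e ∈ p.support}, p.support_countable.to_subtype,
    ⟨fun i => p i.1, (hasSum_subtype_iff_of_support_subset hss).2 p.2⟩,
    fun i => f i.1, fun i => g i.1, ?_, ?_, ?_⟩
  · refine PMF.ext fun y => ?_
    rw [PMF.bind_apply]
    exact (tsum_subtype_eq_of_support_subset
      (pmf_support_fn_subset p (fun a => (PMF.pure (f a)) y))).symm
  · intro i hi
    exact h i.1 i.2
  · refine PMF.ext fun y => ?_
    rw [PMF.bind_apply]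
    exact (tsum_subtype_eq_of_support_subset
      (pmf_support_fn_subset p (fun a => (g a) y))).symm

lemma lift_pure {X Y : Type} (S : X → PMF Y → Prop) (x : X) (Θ : PMF Y)
    (h : S x Θ) : Lift S (PMF.pure x) Θ :=
  ⟨PUnit, inferInstance, PMF.pure PUnit.unit, fun _ => x, fun _ => Θ,
    by rw [PMF.pure_bind], fun _ _ => h, by rw [PMF.pure_bind]⟩

end Aux2
/-- Context bundling the four component BES, the six delimiters and all
side conditions used in the interchange law. -/
structure Ctx (Ev A : Type) where
  B1 : BES Ev A
  B2 : BES Ev A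
  B3 : BES Ev A
  B4 : BES Ev A
  d₁ : Ev
  d₂ : Ev
  d₃ : Ev
  d₄ : Ev
  d₅ : Ev
  d₆ : Ev
  hB1 : IsBES B1
  hB2 : IsBES B2
  hB3 : IsBES B3
  hB4 : IsBES B4
  dj12 : B1.E ∩ B2.E = ∅
  dj13 : B1.E ∩ B3.E = ∅
  dj14 : B1.E ∩ B4.E = ∅
  dj23 : B2.E ∩ B3.E = ∅
  dj24 : B2.E ∩ B4.E = ∅
  dj34 : B3.E ∩ B4.E = ∅
  ndup : List.Nodup [d₁, d₂, d₃, d₄, d₅, d₆]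
  fresh : ∀ d ∈ [d₁, d₂, d₃, d₄, d₅, d₆], d ∉ B1.E ∪ B2.E ∪ B3.E ∪ B4.E

namespace Ctx

variable {Ev A : Type} (C : Ctx Ev A)

/-- The core events. -/
def core : Set Ev := C.B1.E ∪ C.B2.E ∪ C.B3.E ∪ C.B4.E

def LB : BES Ev A := bseq (bpar C.B1 C.B2 C.d₁ C.d₂) (bpar C.B3 C.B4 C.d₃ C.d₄)
def RB : BES Ev A := bpar (bseq C.B1 C.B3) (bseq C.B2 C.B4) C.d₅ C.d₆

noncomputable def rmap : Ev → Ev :=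
  fun e => if e = C.d₁ then C.d₅ else if e = C.d₄ then C.d₆ else e

noncomputable def kp : Ev → Bool := fun e => decide (e ≠ C.d₂ ∧ e ≠ C.d₃)

noncomputable def mt (α : List Ev) : List Ev := (α.filter C.kp).map C.rmap

noncomputable def mset (x : Set Ev) : Set Ev := C.rmap '' (x \ {C.d₂, C.d₃})

lemma fr1 : C.d₁ ∉ C.core := C.fresh C.d₁ (by simp)
lemma fr2 : C.d₂ ∉ C.core := C.fresh C.d₂ (by simp)
lemma fr3 : C.d₃ ∉ C.core := C.fresh C.d₃ (by simp)
lemma fr4 : C.d₄ ∉ C.core := C.fresh C.d₄ (by simp)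
lemma fr5 : C.d₅ ∉ C.core := C.fresh C.d₅ (by simp)
lemma fr6 : C.d₆ ∉ C.core := C.fresh C.d₆ (by simp)

lemma dne : C.d₁ ≠ C.d₂ ∧ C.d₁ ≠ C.d₃ ∧ C.d₁ ≠ C.d₄ ∧ C.d₁ ≠ C.d₅ ∧ C.d₁ ≠ C.d₆ ∧
    C.d₂ ≠ C.d₃ ∧ C.d₂ ≠ C.d₄ ∧ C.d₂ ≠ C.d₅ ∧ C.d₂ ≠ C.d₆ ∧
    C.d₃ ≠ C.d₄ ∧ C.d₃ ≠ C.d₅ ∧ C.d₃ ≠ C.d₆ ∧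
    C.d₄ ≠ C.d₅ ∧ C.d₄ ≠ C.d₆ ∧ C.d₅ ≠ C.d₆ := by
  have := C.ndup
  simp [List.nodup_cons] at this
  tauto

lemma mem1 {e : Ev} (h : e ∈ C.B1.E) : e ∈ C.core := by left; left; left; exact h
lemma mem2 {e : Ev} (h : e ∈ C.B2.E) : e ∈ C.core := by left; left; right; exact h
lemma mem3 {e : Ev} (h : e ∈ C.B3.E) : e ∈ C.core := by left; right; exact h
lemma mem4 {e : Ev} (h : e ∈ C.B4.E) : e ∈ C.core := by right; exact h

lemma djmem {X Y : Set Ev} (h : X ∩ Y = ∅) {e : Ev} (he : e ∈ X) : e ∉ Y := by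
  intro h'
  have : e ∈ X ∩ Y := ⟨he, h'⟩
  rw [h] at this
  exact this

lemma LB_E_iff {e : Ev} : e ∈ C.LB.E ↔ e ∈ C.core ∨ e = C.d₁ ∨ e = C.d₂ ∨
    e = C.d₃ ∨ e = C.d₄ := by
  simp only [LB, bseq, bpar, core, Set.mem_union, Set.mem_insert_iff,
    Set.mem_singleton_iff]
  tauto

lemma RB_E_iff {e : Ev} : e ∈ C.RB.E ↔ e ∈ C.core ∨ e = C.d₅ ∨ e = C.d₆ := by
  simp only [RB, bseq, bpar, core, Set.mem_union, Set.mem_insert_iff,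
    Set.mem_singleton_iff]
  tauto

lemma LB_bundle_iff {x : Set Ev} {e : Ev} : C.LB.bundle x e ↔
    (C.B1.bundle x e ∨ C.B2.bundle x e ∨
      (x = {C.d₁} ∧ (e ∈ bInit C.B1 ∨ e ∈ bInit C.B2)) ∨
      (x = C.B1.final ∧ e = C.d₂) ∨ (x = C.B2.final ∧ e = C.d₂)) ∨
    (C.B3.bundle x e ∨ C.B4.bundle x e ∨
      (x = {C.d₃} ∧ (e ∈ bInit C.B3 ∨ e ∈ bInit C.B4)) ∨
      (x = C.B3.final ∧ e = C.d₄) ∨ (x = C.B4.final ∧ e = C.d₄)) ∨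
    (x = {C.d₂} ∧ e ∈ bInit (bpar C.B3 C.B4 C.d₃ C.d₄)) := by
  simp only [LB, bseq, bpar]

lemma LB_final : C.LB.final = {C.d₄} := rfl

lemma RB_bundle_iff {x : Set Ev} {e : Ev} : C.RB.bundle x e ↔
    (C.B1.bundle x e ∨ C.B3.bundle x e ∨ (x = C.B1.final ∧ e ∈ bInit C.B3)) ∨
    (C.B2.bundle x e ∨ C.B4.bundle x e ∨ (x = C.B2.final ∧ e ∈ bInit C.B4)) ∨
    (x = {C.d₅} ∧ (e ∈ bInit (bseq C.B1 C.B3) ∨ e ∈ bInit (bseq C.B2 C.B4))) ∨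
    (x = C.B3.final ∧ e = C.d₆) ∨ (x = C.B4.final ∧ e = C.d₆) := by
  simp only [RB, bseq, bpar]

lemma RB_final : C.RB.final = {C.d₆} := rfl

lemma LB_conflict_iff {u v : Ev} : C.LB.conflict u v ↔
    C.B1.conflict u v ∨ C.B2.conflict u v ∨ C.B3.conflict u v ∨
    C.B4.conflict u v := by
  simp only [LB, bseq, bpar]
  tauto

lemma RB_conflict_iff {u v : Ev} : C.RB.conflict u v ↔
    C.B1.conflict u v ∨ C.B2.conflict u v ∨ C.B3.conflict u v ∨
    C.B4.conflict u v := by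
  simp only [RB, bseq, bpar]
  tauto

lemma rmap_d1 : C.rmap C.d₁ = C.d₅ := by simp [rmap]

lemma rmap_d4 : C.rmap C.d₄ = C.d₆ := by
  have h : C.d₄ ≠ C.d₁ := Ne.symm C.dne.2.2.1
  simp [rmap, h]

lemma rmap_eq_self {e : Ev} (h1 : e ≠ C.d₁) (h4 : e ≠ C.d₄) : C.rmap e = e := by
  simp [rmap, h1, h4]

lemma rmap_core {e : Ev} (he : e ∈ C.core) : C.rmap e = e :=
  C.rmap_eq_self (fun h => C.fr1 (h ▸ he)) (fun h => C.fr4 (h ▸ he))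

lemma rmap_mem_core {a : Ev} (ha : C.rmap a ∈ C.core) : C.rmap a = a := by
  by_cases h1 : a = C.d₁
  · rw [h1, C.rmap_d1] at ha; exact absurd ha C.fr5
  by_cases h4 : a = C.d₄
  · rw [h4, C.rmap_d4] at ha; exact absurd ha C.fr6
  exact C.rmap_eq_self h1 h4

lemma rmap_inj {a b : Ev} (ha : a ∈ C.LB.E) (hb : b ∈ C.LB.E)
    (h : C.rmap a = C.rmap b) : a = b := by
  have h5a : a ≠ C.d₅ := fun h' => by
    rcases C.LB_E_iff.1 ha with hc | h'' | h'' | h'' | h'' <;>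
      [exact C.fr5 (h' ▸ hc); exact C.dne.2.2.2.1 (h' ▸ h'').symm;
       exact C.dne.2.2.2.2.2.2.2.1 (h' ▸ h'').symm;
       exact C.dne.2.2.2.2.2.2.2.2.2.2.1 (h' ▸ h'').symm;
       exact C.dne.2.2.2.2.2.2.2.2.2.2.2.2.1 (h' ▸ h'').symm]
  have h6a : a ≠ C.d₆ := fun h' => by
    rcases C.LB_E_iff.1 ha with hc | h'' | h'' | h'' | h'' <;>
      [exact C.fr6 (h' ▸ hc); exact C.dne.2.2.2.2.1 (h' ▸ h'').symm;
       exact C.dne.2.2.2.2.2.2.2.2.1 (h' ▸ h'').symm;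
       exact C.dne.2.2.2.2.2.2.2.2.2.2.2.1 (h' ▸ h'').symm;
       exact C.dne.2.2.2.2.2.2.2.2.2.2.2.2.2.1 (h' ▸ h'').symm]
  have h5b : b ≠ C.d₅ := fun h' => by
    rcases C.LB_E_iff.1 hb with hc | h'' | h'' | h'' | h'' <;>
      [exact C.fr5 (h' ▸ hc); exact C.dne.2.2.2.1 (h' ▸ h'').symm;
       exact C.dne.2.2.2.2.2.2.2.1 (h' ▸ h'').symm;
       exact C.dne.2.2.2.2.2.2.2.2.2.2.1 (h' ▸ h'').symm;
       exact C.dne.2.2.2.2.2.2.2.2.2.2.2.2.1 (h' ▸ h'').symm]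
  have h6b : b ≠ C.d₆ := fun h' => by
    rcases C.LB_E_iff.1 hb with hc | h'' | h'' | h'' | h'' <;>
      [exact C.fr6 (h' ▸ hc); exact C.dne.2.2.2.2.1 (h' ▸ h'').symm;
       exact C.dne.2.2.2.2.2.2.2.2.1 (h' ▸ h'').symm;
       exact C.dne.2.2.2.2.2.2.2.2.2.2.2.1 (h' ▸ h'').symm;
       exact C.dne.2.2.2.2.2.2.2.2.2.2.2.2.2.1 (h' ▸ h'').symm]
  by_cases ha1 : a = C.d₁ <;> by_cases hb1 : b = C.d₁
  · rw [ha1, hb1]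
  · rw [ha1, C.rmap_d1] at h
    by_cases hb4 : b = C.d₄
    · rw [hb4, C.rmap_d4] at h; exact absurd h C.dne.2.2.2.2.2.2.2.2.2.2.2.2.2.2
    · rw [C.rmap_eq_self hb1 hb4] at h; exact absurd h.symm h5b
  · rw [hb1, C.rmap_d1] at h
    by_cases ha4 : a = C.d₄
    · rw [ha4, C.rmap_d4] at h; exact absurd h.symm C.dne.2.2.2.2.2.2.2.2.2.2.2.2.2.2
    · rw [C.rmap_eq_self ha1 ha4] at h; exact absurd h h5a
  · by_cases ha4 : a = C.d₄ <;> by_cases hb4 : b = C.d₄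
    · rw [ha4, hb4]
    · rw [ha4, C.rmap_d4, C.rmap_eq_self hb1 hb4] at h; exact absurd h.symm h6b
    · rw [hb4, C.rmap_d4, C.rmap_eq_self ha1 ha4] at h; exact absurd h h6a
    · rw [C.rmap_eq_self ha1 ha4, C.rmap_eq_self hb1 hb4] at h; exact h

lemma kp_core {e : Ev} (he : e ∈ C.core) : C.kp e = true := by
  simp only [kp, decide_eq_true_eq]
  exact ⟨fun h => C.fr2 (h ▸ he), fun h => C.fr3 (h ▸ he)⟩

lemma kp_d1 : C.kp C.d₁ = true := by
  simp only [kp, decide_eq_true_eq]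
  exact ⟨C.dne.1, C.dne.2.1⟩

lemma kp_d4 : C.kp C.d₄ = true := by
  simp only [kp, decide_eq_true_eq]
  exact ⟨(C.dne.2.2.2.2.2.2.1).symm, (C.dne.2.2.2.2.2.2.2.2.2.1).symm⟩

lemma kp_true {e : Ev} (h : C.kp e = true) : e ≠ C.d₂ ∧ e ≠ C.d₃ := by
  simpa [kp] using h

lemma mem_mt_core {α : List Ev} {a : Ev} (ha : a ∈ α) (hc : a ∈ C.core) :
    a ∈ C.mt α := by
  rw [mt, mem_map_filter]
  exact ⟨a, ha, C.kp_core hc, C.rmap_core hc⟩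

lemma mem_mt_d1 {α : List Ev} (ha : C.d₁ ∈ α) : C.d₅ ∈ C.mt α := by
  rw [mt, mem_map_filter]
  exact ⟨C.d₁, ha, C.kp_d1, C.rmap_d1⟩

lemma mem_mt_d4 {α : List Ev} (ha : C.d₄ ∈ α) : C.d₆ ∈ C.mt α := by
  rw [mt, mem_map_filter]
  exact ⟨C.d₄, ha, C.kp_d4, C.rmap_d4⟩

lemma binit_subset_E {ℰ : BES Ev A} : bInit ℰ ⊆ ℰ.E := fun _ he => he.1

lemma binit_seq_subset {Ba Bb : BES Ev A} : bInit (bseq Ba Bb) ⊆ bInit Ba := by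
  intro e he
  obtain ⟨heE, hnb⟩ := he
  have hEa : e ∈ Ba.E := by
    rcases heE with h | h
    · exact h
    · exfalso
      by_cases hb : ∀ x, ¬ Bb.bundle x e
      · exact hnb Ba.final (Or.inr (Or.inr ⟨rfl, h, hb⟩))
      · push_neg at hb
        obtain ⟨x, hx⟩ := hb
        exact hnb x (Or.inr (Or.inl hx))
  exact ⟨hEa, fun x hx => hnb x (Or.inl hx)⟩

lemma d3_binit : C.d₃ ∈ bInit (bpar C.B3 C.B4 C.d₃ C.d₄) := by
  refine ⟨by right; simp, ?_⟩
  intro x hx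
  rcases hx with h | h | h | h | h
  · exact C.fr3 (C.mem3 (C.hB3.2.2.2.1 _ _ h).1)
  · exact C.fr3 (C.mem4 (C.hB4.2.2.2.1 _ _ h).1)
  · rcases h.2 with h' | h'
    · exact C.fr3 (C.mem3 (binit_subset_E h'))
    · exact C.fr3 (C.mem4 (binit_subset_E h'))
  · exact C.dne.2.2.2.2.2.2.2.2.2.1 h.2
  · exact C.dne.2.2.2.2.2.2.2.2.2.1 h.2

lemma mt_isTrace {α : List Ev} (hT : IsTrace C.LB α) : IsTrace C.RB (C.mt α) := by
  intro l e rr hdec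
  obtain ⟨l₀, e₀, r₀, hα, hk, hre, hml, hmr⟩ := map_filter_split hdec
  have hf := trace_fact hT hα
  have he₀E : e₀ ∈ C.LB.E := hf.1
  have hbun := hf.2.1
  have hconf := hf.2.2
  have hlml : l = C.mt l₀ := hml.symm
  subst hlml
  subst hre
  -- part (iii): distinctness and conflict freeness
  have hIII : ∀ e' ∈ C.mt l₀, C.rmap e₀ ≠ e' ∧ ¬ C.RB.conflict (C.rmap e₀) e' := by
    intro e' he'
    rw [mt, mem_map_filter] at he'
    obtain ⟨a, hal, hka, rfl⟩ := he'
    have haα : a ∈ α := by rw [hα]; exact List.mem_append.2 (Or.inl hal)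
    have haE : a ∈ C.LB.E := hT.mem_E haα
    have hc := hconf a hal
    refine ⟨fun h => hc.1 (C.rmap_inj he₀E haE h), ?_⟩
    intro hcf
    have key : C.rmap e₀ ∈ C.core → C.rmap a ∈ C.core → False := by
      intro h1 h2
      have he0 := C.rmap_mem_core h1
      have ha0 := C.rmap_mem_core h2
      rw [he0, ha0] at hcf
      exact hc.2 (C.LB_conflict_iff.2 (C.RB_conflict_iff.1 hcf))
    rcases C.RB_conflict_iff.1 hcf with h | h | h | h
    · have hm := C.hB1.2.2.1 _ _ h
      exact key (C.mem1 hm.1) (C.mem1 hm.2)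
    · have hm := C.hB2.2.2.1 _ _ h
      exact key (C.mem2 hm.1) (C.mem2 hm.2)
    · have hm := C.hB3.2.2.1 _ _ h
      exact key (C.mem3 hm.1) (C.mem3 hm.2)
    · have hm := C.hB4.2.2.1 _ _ h
      exact key (C.mem4 hm.1) (C.mem4 hm.2)
  have hk' := C.kp_true hk
  have hcls := C.LB_E_iff.1 he₀E
  rcases hcls with hcore | h1 | h2 | h3 | h4
  · -- e₀ is a core event; rmap fixes it
    have hrfix := C.rmap_core hcore
    rw [hrfix]
    rw [hrfix] at hIII
    refine ⟨C.RB_E_iff.2 (Or.inl hcore), ?_, hIII⟩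
    intro x hx
    rcases hcore with ((he₀ | he₀) | he₀) | he₀
    · -- e₀ ∈ B1.E
      rcases C.RB_bundle_iff.1 hx with (h | h | h) | (h | h | h) | h | h | h
      · obtain ⟨e', he'l, he'x⟩ := hbun x (C.LB_bundle_iff.2 (Or.inl (Or.inl h)))
        exact ⟨e', C.mem_mt_core he'l (C.mem1 ((C.hB1.2.2.2.1 _ _ h).2.1 he'x)), he'x⟩
      · exact absurd (C.hB3.2.2.2.1 _ _ h).1 (djmem C.dj13 he₀)
      · exact absurd (binit_subset_E h.2) (djmem C.dj13 he₀)
      · exact absurd (C.hB2.2.2.2.1 _ _ h).1 (djmem C.dj12 he₀)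
      · exact absurd (C.hB4.2.2.2.1 _ _ h).1 (djmem C.dj14 he₀)
      · exact absurd (binit_subset_E h.2) (djmem C.dj14 he₀)
      · rcases h.2 with hi | hi
        · have : e₀ ∈ bInit C.B1 := binit_seq_subset hi
          obtain ⟨e', he'l, he'd⟩ := hbun {C.d₁}
            (C.LB_bundle_iff.2 (Or.inl (Or.inr (Or.inr (Or.inl ⟨rfl, Or.inl this⟩)))))
          rw [Set.mem_singleton_iff] at he'd
          subst he'd
          exact ⟨C.d₅, C.mem_mt_d1 he'l, by rw [h.1]; exact rfl⟩
        · exact absurd (binit_subset_E (binit_seq_subset hi)) (djmem C.dj12 he₀)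
      · exact absurd (C.mem1 (h.2 ▸ he₀)) C.fr6
      · exact absurd (C.mem1 (h.2 ▸ he₀)) C.fr6
    · -- e₀ ∈ B2.E
      rcases C.RB_bundle_iff.1 hx with (h | h | h) | (h | h | h) | h | h | h
      · exact absurd (C.hB1.2.2.2.1 _ _ h).1
          (fun hh => djmem C.dj12 hh he₀)
      · exact absurd (C.hB3.2.2.2.1 _ _ h).1 (djmem C.dj23 he₀)
      · exact absurd (binit_subset_E h.2) (djmem C.dj23 he₀)
      · obtain ⟨e', he'l, he'x⟩ := hbun x (C.LB_bundle_iff.2 (Or.inl (Or.inr (Or.inl h))))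
        exact ⟨e', C.mem_mt_core he'l (C.mem2 ((C.hB2.2.2.2.1 _ _ h).2.1 he'x)), he'x⟩
      · exact absurd (C.hB4.2.2.2.1 _ _ h).1 (djmem C.dj24 he₀)
      · exact absurd (binit_subset_E h.2) (djmem C.dj24 he₀)
      · rcases h.2 with hi | hi
        · exact absurd (binit_subset_E (binit_seq_subset hi))
            (fun hh => djmem C.dj12 hh he₀)
        · have : e₀ ∈ bInit C.B2 := binit_seq_subset hi
          obtain ⟨e', he'l, he'd⟩ := hbun {C.d₁}
            (C.LB_bundle_iff.2 (Or.inl (Or.inr (Or.inr (Or.inl ⟨rfl, Or.inr this⟩)))))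
          rw [Set.mem_singleton_iff] at he'd
          subst he'd
          exact ⟨C.d₅, C.mem_mt_d1 he'l, by rw [h.1]; exact rfl⟩
      · exact absurd (C.mem2 (h.2 ▸ he₀)) C.fr6
      · exact absurd (C.mem2 (h.2 ▸ he₀)) C.fr6
    · -- e₀ ∈ B3.E
      rcases C.RB_bundle_iff.1 hx with (h | h | h) | (h | h | h) | h | h | h
      · exact absurd (C.hB1.2.2.2.1 _ _ h).1 (fun hh => djmem C.dj13 hh he₀)
      · obtain ⟨e', he'l, he'x⟩ := hbun x (C.LB_bundle_iff.2 (Or.inr (Or.inl (Or.inl h))))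
        exact ⟨e', C.mem_mt_core he'l (C.mem3 ((C.hB3.2.2.2.1 _ _ h).2.1 he'x)), he'x⟩
      · -- x = B1.final ∧ e₀ ∈ bInit B3 : follow the chain d₃, d₂, B1.final
        obtain ⟨e', he'l, he'd⟩ := hbun {C.d₃}
          (C.LB_bundle_iff.2 (Or.inr (Or.inl (Or.inr (Or.inr (Or.inl ⟨rfl, Or.inl h.2⟩))))))
        rw [Set.mem_singleton_iff] at he'd
        subst he'd
        obtain ⟨s₁, t₁, hs₁⟩ := List.append_of_mem he'l
        have hα3 : α = s₁ ++ C.d₃ :: (t₁ ++ e₀ :: r₀) := by rw [hα, hs₁]; simp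
        have hf3 := trace_fact hT hα3
        obtain ⟨e', he'l2, he'd2⟩ := hf3.2.1 {C.d₂}
          (C.LB_bundle_iff.2 (Or.inr (Or.inr ⟨rfl, C.d3_binit⟩)))
        rw [Set.mem_singleton_iff] at he'd2
        subst he'd2
        obtain ⟨s₂, t₂, hs₂⟩ := List.append_of_mem he'l2
        have hα2 : α = s₂ ++ C.d₂ :: (t₂ ++ C.d₃ :: (t₁ ++ e₀ :: r₀)) := by
          rw [hα3, hs₂]; simp
        have hf2 := trace_fact hT hα2
        obtain ⟨e', he'l3, he'f⟩ := hf2.2.1 C.B1.final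
          (C.LB_bundle_iff.2 (Or.inl (Or.inr (Or.inr (Or.inr (Or.inl ⟨rfl, rfl⟩))))))
        have he'E : e' ∈ C.B1.E := C.hB1.2.2.2.2.2.1 he'f
        have he'l₀ : e' ∈ l₀ := by
          rw [hs₁, hs₂]
          simp only [List.mem_append, List.mem_cons]
          exact Or.inl (Or.inl he'l3)
        exact ⟨e', C.mem_mt_core he'l₀ (C.mem1 he'E), by rw [h.1]; exact he'f⟩
      · exact absurd (C.hB2.2.2.2.1 _ _ h).1 (fun hh => djmem C.dj23 hh he₀)
      · exact absurd (C.hB4.2.2.2.1 _ _ h).1 (djmem C.dj34 he₀)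
      · exact absurd (binit_subset_E h.2) (djmem C.dj34 he₀)
      · rcases h.2 with hi | hi
        · exact absurd (binit_subset_E (binit_seq_subset hi))
            (fun hh => djmem C.dj13 hh he₀)
        · exact absurd (binit_subset_E (binit_seq_subset hi))
            (fun hh => djmem C.dj23 hh he₀)
      · exact absurd (C.mem3 (h.2 ▸ he₀)) C.fr6
      · exact absurd (C.mem3 (h.2 ▸ he₀)) C.fr6
    · -- e₀ ∈ B4.E
      rcases C.RB_bundle_iff.1 hx with (h | h | h) | (h | h | h) | h | h | h
      · exact absurd (C.hB1.2.2.2.1 _ _ h).1 (fun hh => djmem C.dj14 hh he₀)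
      · exact absurd (C.hB3.2.2.2.1 _ _ h).1 (fun hh => djmem C.dj34 hh he₀)
      · exact absurd (binit_subset_E h.2) (fun hh => djmem C.dj34 hh he₀)
      · exact absurd (C.hB2.2.2.2.1 _ _ h).1 (fun hh => djmem C.dj24 hh he₀)
      · obtain ⟨e', he'l, he'x⟩ := hbun x (C.LB_bundle_iff.2 (Or.inr (Or.inl (Or.inr (Or.inl h)))))
        exact ⟨e', C.mem_mt_core he'l (C.mem4 ((C.hB4.2.2.2.1 _ _ h).2.1 he'x)), he'x⟩
      · -- x = B2.final ∧ e₀ ∈ bInit B4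
        obtain ⟨e', he'l, he'd⟩ := hbun {C.d₃}
          (C.LB_bundle_iff.2 (Or.inr (Or.inl (Or.inr (Or.inr (Or.inl ⟨rfl, Or.inr h.2⟩))))))
        rw [Set.mem_singleton_iff] at he'd
        subst he'd
        obtain ⟨s₁, t₁, hs₁⟩ := List.append_of_mem he'l
        have hα3 : α = s₁ ++ C.d₃ :: (t₁ ++ e₀ :: r₀) := by rw [hα, hs₁]; simp
        have hf3 := trace_fact hT hα3
        obtain ⟨e', he'l2, he'd2⟩ := hf3.2.1 {C.d₂}
          (C.LB_bundle_iff.2 (Or.inr (Or.inr ⟨rfl, C.d3_binit⟩)))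
        rw [Set.mem_singleton_iff] at he'd2
        subst he'd2
        obtain ⟨s₂, t₂, hs₂⟩ := List.append_of_mem he'l2
        have hα2 : α = s₂ ++ C.d₂ :: (t₂ ++ C.d₃ :: (t₁ ++ e₀ :: r₀)) := by
          rw [hα3, hs₂]; simp
        have hf2 := trace_fact hT hα2
        obtain ⟨e', he'l3, he'f⟩ := hf2.2.1 C.B2.final
          (C.LB_bundle_iff.2 (Or.inl (Or.inr (Or.inr (Or.inr (Or.inr ⟨rfl, rfl⟩))))))
        have he'E : e' ∈ C.B2.E := C.hB2.2.2.2.2.2.1 he'f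
        have he'l₀ : e' ∈ l₀ := by
          rw [hs₁, hs₂]
          simp only [List.mem_append, List.mem_cons]
          exact Or.inl (Or.inl he'l3)
        exact ⟨e', C.mem_mt_core he'l₀ (C.mem2 he'E), by rw [h.1]; exact he'f⟩
      · rcases h.2 with hi | hi
        · exact absurd (binit_subset_E (binit_seq_subset hi))
            (fun hh => djmem C.dj14 hh he₀)
        · exact absurd (binit_subset_E (binit_seq_subset hi))
            (fun hh => djmem C.dj24 hh he₀)
      · exact absurd (C.mem4 (h.2 ▸ he₀)) C.fr6
      · exact absurd (C.mem4 (h.2 ▸ he₀)) C.fr6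
  · -- e₀ = d₁
    subst h1
    rw [C.rmap_d1]
    rw [C.rmap_d1] at hIII
    refine ⟨C.RB_E_iff.2 (Or.inr (Or.inl rfl)), ?_, hIII⟩
    intro x hx
    exfalso
    rcases C.RB_bundle_iff.1 hx with (h | h | h) | (h | h | h) | h | h | h
    · exact C.fr5 (C.mem1 (C.hB1.2.2.2.1 _ _ h).1)
    · exact C.fr5 (C.mem3 (C.hB3.2.2.2.1 _ _ h).1)
    · exact C.fr5 (C.mem3 (binit_subset_E h.2))
    · exact C.fr5 (C.mem2 (C.hB2.2.2.2.1 _ _ h).1)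
    · exact C.fr5 (C.mem4 (C.hB4.2.2.2.1 _ _ h).1)
    · exact C.fr5 (C.mem4 (binit_subset_E h.2))
    · rcases h.2 with hi | hi
      · exact C.fr5 (C.mem1 (binit_subset_E (binit_seq_subset hi)))
      · exact C.fr5 (C.mem2 (binit_subset_E (binit_seq_subset hi)))
    · exact C.dne.2.2.2.2.2.2.2.2.2.2.2.2.2.2 h.2
    · exact C.dne.2.2.2.2.2.2.2.2.2.2.2.2.2.2 h.2
  · exact absurd h2 hk'.1
  · exact absurd h3 hk'.2
  · -- e₀ = d₄
    subst h4
    rw [C.rmap_d4]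
    rw [C.rmap_d4] at hIII
    refine ⟨C.RB_E_iff.2 (Or.inr (Or.inr rfl)), ?_, hIII⟩
    intro x hx
    rcases C.RB_bundle_iff.1 hx with (h | h | h) | (h | h | h) | h | h | h
    · exact absurd (C.mem1 (C.hB1.2.2.2.1 _ _ h).1) C.fr6
    · exact absurd (C.mem3 (C.hB3.2.2.2.1 _ _ h).1) C.fr6
    · exact absurd (C.mem3 (binit_subset_E h.2)) C.fr6
    · exact absurd (C.mem2 (C.hB2.2.2.2.1 _ _ h).1) C.fr6
    · exact absurd (C.mem4 (C.hB4.2.2.2.1 _ _ h).1) C.fr6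
    · exact absurd (C.mem4 (binit_subset_E h.2)) C.fr6
    · rcases h.2 with hi | hi
      · exact absurd (C.mem1 (binit_subset_E (binit_seq_subset hi))) C.fr6
      · exact absurd (C.mem2 (binit_subset_E (binit_seq_subset hi))) C.fr6
    · obtain ⟨e', he'l, he'f⟩ := hbun C.B3.final
        (C.LB_bundle_iff.2 (Or.inr (Or.inl (Or.inr (Or.inr (Or.inr (Or.inl ⟨rfl, rfl⟩)))))))
      exact ⟨e', C.mem_mt_core he'l (C.mem3 (C.hB3.2.2.2.2.2.1 he'f)),
        by rw [h.1]; exact he'f⟩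
    · obtain ⟨e', he'l, he'f⟩ := hbun C.B4.final
        (C.LB_bundle_iff.2 (Or.inr (Or.inl (Or.inr (Or.inr (Or.inr (Or.inr ⟨rfl, rfl⟩)))))))
      exact ⟨e', C.mem_mt_core he'l (C.mem4 (C.hB4.2.2.2.2.2.1 he'f)),
        by rw [h.1]; exact he'f⟩

lemma config_subset {ℰ : BES Ev A} {x : Set Ev} (h : IsConfig ℰ x) : x ⊆ ℰ.E := by
  obtain ⟨α, hT, hset⟩ := h
  intro e he
  rw [← hset] at he
  exact hT.mem_E he

lemma mset_empty : C.mset ∅ = ∅ := by simp [mset]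

lemma mset_union_keep {x : Set Ev} {e : Ev} (h2 : e ≠ C.d₂) (h3 : e ≠ C.d₃) :
    C.mset (x ∪ {e}) = C.mset x ∪ {C.rmap e} := by
  ext a
  simp only [mset, Set.mem_image, Set.mem_union, Set.mem_diff,
    Set.mem_insert_iff, Set.mem_singleton_iff]
  constructor
  · rintro ⟨b, ⟨hb | rfl, hbn⟩, rfl⟩
    · exact Or.inl ⟨b, ⟨hb, hbn⟩, rfl⟩
    · exact Or.inr rfl
  · rintro (⟨b, ⟨hb, hbn⟩, rfl⟩ | rfl)
    · exact ⟨b, ⟨Or.inl hb, hbn⟩, rfl⟩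
    · exact ⟨e, ⟨Or.inr rfl, by push_neg; exact ⟨h2, h3⟩⟩, rfl⟩

lemma mset_union_drop {x : Set Ev} {e : Ev} (h : e = C.d₂ ∨ e = C.d₃) :
    C.mset (x ∪ {e}) = C.mset x := by
  ext a
  simp only [mset, Set.mem_image, Set.mem_union, Set.mem_diff,
    Set.mem_insert_iff, Set.mem_singleton_iff]
  constructor
  · rintro ⟨b, ⟨hb | rfl, hbn⟩, rfl⟩
    · exact ⟨b, ⟨hb, hbn⟩, rfl⟩
    · exact absurd h hbn
  · rintro ⟨b, ⟨hb, hbn⟩, rfl⟩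
    exact ⟨b, ⟨Or.inl hb, hbn⟩, rfl⟩

lemma mem_mset_core {x : Set Ev} {e : Ev} (he : e ∈ C.core) :
    e ∈ C.mset x ↔ e ∈ x := by
  constructor
  · rintro ⟨a, ⟨ha, _⟩, hra⟩
    have : C.rmap a = a := C.rmap_mem_core (hra ▸ he)
    rw [this] at hra
    exact hra ▸ ha
  · intro hx
    refine ⟨e, ⟨hx, fun hmem => ?_⟩, C.rmap_core he⟩
    rcases hmem with h | h
    · exact C.fr2 (h ▸ he)
    · exact C.fr3 (h ▸ he)

lemma rmap_self_not_d (hx : ∀ e ∈ ({C.d₅, C.d₆} : Set Ev), e ∉ C.LB.E) : True := trivial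

lemma d5_notin_LB : C.d₅ ∉ C.LB.E := by
  intro h
  rcases C.LB_E_iff.1 h with hc | h' | h' | h' | h'
  · exact C.fr5 hc
  · exact C.dne.2.2.2.1 h'.symm
  · exact C.dne.2.2.2.2.2.2.2.1 h'.symm
  · exact C.dne.2.2.2.2.2.2.2.2.2.2.1 h'.symm
  · exact C.dne.2.2.2.2.2.2.2.2.2.2.2.2.1 h'.symm

lemma d6_notin_LB : C.d₆ ∉ C.LB.E := by
  intro h
  rcases C.LB_E_iff.1 h with hc | h' | h' | h' | h'
  · exact C.fr6 hc
  · exact C.dne.2.2.2.2.1 h'.symm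
  · exact C.dne.2.2.2.2.2.2.2.2.1 h'.symm
  · exact C.dne.2.2.2.2.2.2.2.2.2.2.2.1 h'.symm
  · exact C.dne.2.2.2.2.2.2.2.2.2.2.2.2.2.1 h'.symm

lemma d5_notmem_mset {x : Set Ev} (hx : x ⊆ C.LB.E) (h : C.d₁ ∉ x) :
    C.d₅ ∉ C.mset x := by
  rintro ⟨a, ⟨ha, _⟩, hra⟩
  by_cases h1 : a = C.d₁
  · exact h (h1 ▸ ha)
  by_cases h4 : a = C.d₄
  · rw [h4, C.rmap_d4] at hra
    exact C.dne.2.2.2.2.2.2.2.2.2.2.2.2.2.2 hra.symm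
  · rw [C.rmap_eq_self h1 h4] at hra
    exact C.d5_notin_LB (hra ▸ hx ha)

lemma d6_notmem_mset {x : Set Ev} (hx : x ⊆ C.LB.E) (h : C.d₄ ∉ x) :
    C.d₆ ∉ C.mset x := by
  rintro ⟨a, ⟨ha, _⟩, hra⟩
  by_cases h1 : a = C.d₁
  · rw [h1, C.rmap_d1] at hra
    exact C.dne.2.2.2.2.2.2.2.2.2.2.2.2.2.2 hra
  by_cases h4 : a = C.d₄
  · exact h (h4 ▸ ha)
  · rw [C.rmap_eq_self h1 h4] at hra
    exact C.d6_notin_LB (hra ▸ hx ha)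

lemma mset_setOf {α : List Ev} : {e | e ∈ C.mt α} = C.mset {e | e ∈ α} := by
  ext a
  simp only [Set.mem_setOf_eq, mt, mem_map_filter, mset, Set.mem_image,
    Set.mem_diff, Set.mem_insert_iff, Set.mem_singleton_iff, kp,
    decide_eq_true_eq]
  constructor
  · rintro ⟨b, hb, ⟨h2, h3⟩, rfl⟩
    exact ⟨b, ⟨hb, by push_neg; exact ⟨h2, h3⟩⟩, rfl⟩
  · rintro ⟨b, ⟨hb, hbn⟩, rfl⟩
    push_neg at hbn
    exact ⟨b, hb, hbn, rfl⟩

lemma config_map {x : Set Ev} (h : IsConfig C.LB x) : IsConfig C.RB (C.mset x) := by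
  obtain ⟨α, hT, hset⟩ := h
  exact ⟨C.mt α, C.mt_isTrace hT, by rw [C.mset_setOf, hset]⟩

lemma lab_eq : C.LB.lab = C.RB.lab := by
  funext e
  have hconf : ∀ (a b : A), C.B2.lab e = some a → C.B3.lab e = some b → False :=
    fun a b h2 h3 => djmem C.dj23
      (C.hB2.2.2.2.2.1 e (by simp [h2])) (C.hB3.2.2.2.2.1 e (by simp [h3]))
  show ((C.B1.lab e).orElse fun _ => C.B2.lab e).orElse
      (fun _ => (C.B3.lab e).orElse fun _ => C.B4.lab e) =
    ((C.B1.lab e).orElse fun _ => C.B3.lab e).orElse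
      (fun _ => (C.B2.lab e).orElse fun _ => C.B4.lab e)
  cases h1 : C.B1.lab e with
  | some a => simp [Option.orElse]
  | none =>
    cases h2 : C.B2.lab e with
    | some a =>
      cases h3 : C.B3.lab e with
      | some b => exact absurd (hconf a b h2 h3) not_false
      | none => simp [Option.orElse]
    | none => simp [Option.orElse]

lemma lab_core {e : Ev} (h : C.LB.lab e ≠ none) : e ∈ C.core := by
  by_contra hc
  apply h
  have h1 : C.B1.lab e = none := by
    cases hh : C.B1.lab e with
    | none => rfl
    | some a => exact absurd (C.mem1 (C.hB1.2.2.2.2.1 e (by simp [hh]))) hc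
  have h2 : C.B2.lab e = none := by
    cases hh : C.B2.lab e with
    | none => rfl
    | some a => exact absurd (C.mem2 (C.hB2.2.2.2.2.1 e (by simp [hh]))) hc
  have h3 : C.B3.lab e = none := by
    cases hh : C.B3.lab e with
    | none => rfl
    | some a => exact absurd (C.mem3 (C.hB3.2.2.2.2.1 e (by simp [hh]))) hc
  have h4 : C.B4.lab e = none := by
    cases hh : C.B4.lab e with
    | none => rfl
    | some a => exact absurd (C.mem4 (C.hB4.2.2.2.2.1 e (by simp [hh]))) hc
  show ((C.B1.lab e).orElse fun _ => C.B2.lab e).orElse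
      (fun _ => (C.B3.lab e).orElse fun _ => C.B4.lab e) = none
  rw [h1, h2, h3, h4]
  simp [Option.orElse]

lemma hat_eq {x : Set Ev} : hatSet C.RB (C.mset x) = hatSet C.LB x := by
  ext e
  constructor
  · rintro ⟨hm, hlab⟩
    have hlab' : C.LB.lab e ≠ none := by rw [C.lab_eq]; exact hlab
    have hc := C.lab_core hlab'
    exact ⟨(C.mem_mset_core hc).1 hm, hlab'⟩
  · rintro ⟨hx, hlab⟩
    have hc := C.lab_core hlab
    exact ⟨(C.mem_mset_core hc).2 hx, by rw [← C.lab_eq]; exact hlab⟩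

lemma order_transfer {x : Set Ev} {u v : Ev} (hu : u ∈ C.core) (hv : v ∈ C.core)
    (h : configOrder C.RB (C.mset x) u v) : configOrder C.LB x u v := by
  intro α hTα hset
  have h' := h (C.mt α) (C.mt_isTrace hTα) (by rw [C.mset_setOf, hset])
  have hnd : (C.mt α).Nodup := (C.mt_isTrace hTα).nodup
  rcases traceOrder_split hnd h' with rfl | ⟨l₁, l₂, l₃, hdec⟩
  · exact Relation.ReflTransGen.refl
  · have hdec' : (α.filter C.kp).map C.rmap = l₁ ++ u :: (l₂ ++ v :: l₃) := by
      simpa [mt] using hdec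
    obtain ⟨a₁, u₀, a₂, hα1, hk1, hr1, hm1, hm2⟩ := map_filter_split hdec'
    have hu₀ : u₀ = u := by
      have := C.rmap_mem_core (hr1 ▸ hu)
      rw [this] at hr1
      exact hr1
    obtain ⟨b₁, v₀, b₂, hα2, hk2, hr2, hm3, hm4⟩ := map_filter_split hm2
    have hv₀ : v₀ = v := by
      have := C.rmap_mem_core (hr2 ▸ hv)
      rw [this] at hr2
      exact hr2
    have hαeq : α = a₁ ++ u :: b₁ ++ v :: b₂ := by
      rw [hα1, hα2, hu₀, hv₀]
      simp
    rw [hαeq]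
    exact traceOrder_of_split a₁ u b₁ v b₂

lemma subsum_mset {x : Set Ev} : Subsum C.LB x C.RB (C.mset x) := by
  refine ⟨id, ?_, ?_, ?_⟩
  · rw [C.hat_eq]; exact Set.bijOn_id _
  · intro e _
    show C.LB.lab e = C.RB.lab e
    rw [C.lab_eq]
  · intro e e' he he' hord
    have hec : e ∈ C.core := C.lab_core (by rw [C.lab_eq]; exact he.2)
    have hec' : e' ∈ C.core := C.lab_core (by rw [C.lab_eq]; exact he'.2)
    exact C.order_transfer hec hec' hord

theorem sim (DL DR : Set (PMF Ev))
    (hDL : ∀ p ∈ DL, (p ∈ DR ∧ p.support ⊆ C.core) ∨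
      p = PMF.pure C.d₁ ∨ p = PMF.pure C.d₂ ∨ p = PMF.pure C.d₃ ∨
      p = PMF.pure C.d₄)
    (hD5 : PMF.pure C.d₅ ∈ DR) (hD6 : PMF.pure C.d₆ ∈ DR) :
    Sim (⟨C.LB, DL⟩ : PBES Ev A) (⟨C.RB, DR⟩ : PBES Ev A) := by
  refine ⟨fun x Θ => IsConfig C.LB x ∧ Θ = PMF.pure (C.mset x), ?_, ?_, ?_, ?_⟩
  · exact ⟨⟨[], isTrace_nil _, by ext e; simp⟩, by rw [C.mset_empty]⟩
  · rintro x Θ ⟨hx, rfl⟩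
    refine ⟨hx, ?_⟩
    intro y hy
    rw [PMF.support_pure, Set.mem_singleton_iff] at hy
    subst hy
    exact ⟨C.config_map hx, C.subsum_mset⟩
  · rintro x Θ Δ' ⟨hx, rfl⟩ ⟨hxcf, p, hp, hdisj, hext, hΔ⟩
    have hconfR : IsConfig C.RB (C.mset x) := C.config_map hx
    rcases hDL p hp with ⟨hpR, hcore⟩ | rfl | rfl | rfl | rfl
    · -- p is a distribution of one of the four components
      refine ⟨p.bind (fun e => PMF.pure (C.mset x ∪ {e})), ?_, ?_⟩
      · refine Relation.ReflTransGen.single (lift_pure _ _ _ ?_)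
        refine ⟨hconfR, p, hpR, ?_, ?_, rfl⟩
        · ext e
          simp only [Set.mem_inter_iff, Set.mem_empty_iff_false, iff_false,
            not_and]
          intro hesupp hemx
          have hex : e ∈ x := (C.mem_mset_core (hcore hesupp)).1 hemx
          have : e ∈ p.support ∩ x := ⟨hesupp, hex⟩
          rw [hdisj] at this
          exact this
        · intro e he
          have h2 := C.config_map (hext e he)
          rwa [C.mset_union_keep (fun h => C.fr2 (h ▸ hcore he))
            (fun h => C.fr3 (h ▸ hcore he)), C.rmap_core (hcore he)] at h2
      · rw [hΔ]
        apply lift_of_pmf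
        intro e he
        refine ⟨hext e he, ?_⟩
        rw [C.mset_union_keep (fun h => C.fr2 (h ▸ hcore he))
          (fun h => C.fr3 (h ▸ hcore he)), C.rmap_core (hcore he)]
    · -- p = pure d₁
      have hd1x : C.d₁ ∉ x := by
        intro h
        have : C.d₁ ∈ (PMF.pure C.d₁).support ∩ x := ⟨by simp, h⟩
        rw [hdisj] at this
        exact this
      have hcfg : IsConfig C.LB (x ∪ {C.d₁}) := hext C.d₁ (by simp)
      have hms : C.mset (x ∪ {C.d₁}) = C.mset x ∪ {C.d₅} := by
        rw [C.mset_union_keep C.dne.1 C.dne.2.1, C.rmap_d1]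
      refine ⟨PMF.pure (C.mset x ∪ {C.d₅}), ?_, ?_⟩
      · refine Relation.ReflTransGen.single (lift_pure _ _ _ ?_)
        refine ⟨hconfR, PMF.pure C.d₅, hD5, ?_, ?_, by rw [PMF.pure_bind]⟩
        · ext e
          simp only [PMF.support_pure, Set.mem_inter_iff,
            Set.mem_singleton_iff, Set.mem_empty_iff_false, iff_false, not_and]
          rintro rfl
          exact C.d5_notmem_mset (config_subset hx) hd1x
        · intro e he
          rw [PMF.support_pure, Set.mem_singleton_iff] at he
          subst he
          have := C.config_map hcfg
          rwa [hms] at this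
      · rw [hΔ, PMF.pure_bind]
        exact lift_pure _ _ _ ⟨hcfg, by rw [hms]⟩
    · -- p = pure d₂
      refine ⟨PMF.pure (C.mset x), Relation.ReflTransGen.refl, ?_⟩
      rw [hΔ, PMF.pure_bind]
      exact lift_pure _ _ _ ⟨hext C.d₂ (by simp),
        by rw [C.mset_union_drop (Or.inl rfl)]⟩
    · -- p = pure d₃
      refine ⟨PMF.pure (C.mset x), Relation.ReflTransGen.refl, ?_⟩
      rw [hΔ, PMF.pure_bind]
      exact lift_pure _ _ _ ⟨hext C.d₃ (by simp),
        by rw [C.mset_union_drop (Or.inr rfl)]⟩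
    · -- p = pure d₄
      have hd4x : C.d₄ ∉ x := by
        intro h
        have : C.d₄ ∈ (PMF.pure C.d₄).support ∩ x := ⟨by simp, h⟩
        rw [hdisj] at this
        exact this
      have hcfg : IsConfig C.LB (x ∪ {C.d₄}) := hext C.d₄ (by simp)
      have hms : C.mset (x ∪ {C.d₄}) = C.mset x ∪ {C.d₆} := by
        rw [C.mset_union_keep (Ne.symm C.dne.2.2.2.2.2.2.1)
          (Ne.symm C.dne.2.2.2.2.2.2.2.2.2.1), C.rmap_d4]
      refine ⟨PMF.pure (C.mset x ∪ {C.d₆}), ?_, ?_⟩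
      · refine Relation.ReflTransGen.single (lift_pure _ _ _ ?_)
        refine ⟨hconfR, PMF.pure C.d₆, hD6, ?_, ?_, by rw [PMF.pure_bind]⟩
        · ext e
          simp only [PMF.support_pure, Set.mem_inter_iff,
            Set.mem_singleton_iff, Set.mem_empty_iff_false, iff_false, not_and]
          rintro rfl
          exact C.d6_notmem_mset (config_subset hx) hd4x
        · intro e he
          rw [PMF.support_pure, Set.mem_singleton_iff] at he
          subst he
          have := C.config_map hcfg
          rwa [hms] at this
      · rw [hΔ, PMF.pure_bind]
        exact lift_pure _ _ _ ⟨hcfg, by rw [hms]⟩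
  · rintro x Θ ⟨hx, rfl⟩ hne y hy
    rw [PMF.support_pure, Set.mem_singleton_iff] at hy
    subst hy
    obtain ⟨a, ha1, ha2⟩ := hne
    have ha4 : a = C.d₄ := ha2
    subst ha4
    refine ⟨C.d₆, ?_, rfl⟩
    refine ⟨C.d₄, ⟨ha1, fun hmem => ?_⟩, C.rmap_d4⟩
    rcases hmem with h | h
    · exact C.dne.2.2.2.2.2.2.1 h.symm
    · exact C.dne.2.2.2.2.2.2.2.2.2.1 h.symm

end Ctx

/-- The interchange law modulo probabilistic simulation:
`(P ‖ Q) · (P' ‖ Q') ⊑ (P · P') ‖ (Q · Q')`. -/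
theorem interchange_law {Ev A : Type} (P Q P' Q' : PBES Ev A)
    (hP : IsPBES P) (hQ : IsPBES Q) (hP' : IsPBES P') (hQ' : IsPBES Q')
    (hrP : Regular P.bes) (hrQ : Regular Q.bes)
    (hrP' : Regular P'.bes) (hrQ' : Regular Q'.bes)
    (h₁ : P.bes.E ∩ Q.bes.E = ∅) (h₂ : P.bes.E ∩ P'.bes.E = ∅)
    (h₃ : P.bes.E ∩ Q'.bes.E = ∅) (h₄ : Q.bes.E ∩ P'.bes.E = ∅)
    (h₅ : Q.bes.E ∩ Q'.bes.E = ∅) (h₆ : P'.bes.E ∩ Q'.bes.E = ∅)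
    (d₁ d₂ d₃ d₄ d₅ d₆ : Ev)
    (hnodup : List.Nodup [d₁, d₂, d₃, d₄, d₅, d₆])
    (hfresh : ∀ d ∈ [d₁, d₂, d₃, d₄, d₅, d₆],
      d ∉ P.bes.E ∪ Q.bes.E ∪ P'.bes.E ∪ Q'.bes.E) :
    Sim (pseq (ppar P Q d₁ d₂) (ppar P' Q' d₃ d₄))
        (ppar (pseq P P') (pseq Q Q') d₅ d₆) := by
  let C : Ctx Ev A := ⟨P.bes, Q.bes, P'.bes, Q'.bes, d₁, d₂, d₃, d₄, d₅, d₆,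
    hP.1, hQ.1, hP'.1, hQ'.1, h₁, h₂, h₃, h₄, h₅, h₆, hnodup, hfresh⟩
  refine Ctx.sim C
    ((P.dists ∪ Q.dists ∪ {PMF.pure d₁, PMF.pure d₂}) ∪
      (P'.dists ∪ Q'.dists ∪ {PMF.pure d₃, PMF.pure d₄}))
    ((P.dists ∪ P'.dists) ∪ (Q.dists ∪ Q'.dists) ∪ {PMF.pure d₅, PMF.pure d₆})
    ?_ (Or.inr (Set.mem_insert _ _)) (Or.inr (Set.mem_insert_of_mem _ rfl))
  intro p hp
  rcases hp with ((hm | hm) | hm) | ((hm | hm) | hm)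
  · exact Or.inl ⟨Or.inl (Or.inl (Or.inl hm)),
      fun e he => C.mem1 (support_subset_E hP.1 (hP.2.2.1 p hm) he)⟩
  · exact Or.inl ⟨Or.inl (Or.inr (Or.inl hm)),
      fun e he => C.mem2 (support_subset_E hQ.1 (hQ.2.2.1 p hm) he)⟩
  · rcases hm with hm | hm
    · exact Or.inr (Or.inl hm)
    · exact Or.inr (Or.inr (Or.inl hm))
  · exact Or.inl ⟨Or.inl (Or.inl (Or.inr hm)),
      fun e he => C.mem3 (support_subset_E hP'.1 (hP'.2.2.1 p hm) he)⟩
  · exact Or.inl ⟨Or.inl (Or.inr (Or.inr hm)),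
      fun e he => C.mem4 (support_subset_E hQ'.1 (hQ'.2.2.1 p hm) he)⟩
  · rcases hm with hm | hm
    · exact Or.inr (Or.inr (Or.inr (Or.inl hm)))
    · exact Or.inr (Or.inr (Or.inr (Or.inr hm)))

end PCKA
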